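/- The composition operator ⊙ on constraint automaton steps is associative: for constraint automaton steps cas1, cas2, cas3 over port sets N1, N2, N3 respectively, (cas1 ⊙ cas2) ⊙ cas3 = cas1 ⊙ (cas2 ⊙ cas3), where a composition involving ⊥ is ⊥, and the composite of cas1 ⊙ cas2 is taken over port set N1 ∪ N2. -/

import Mathlib

/-- Well-formedness of a constraint automaton step: the domain of the data
assignment is exactly the flow set. -/
def WFCAS {Port D : Type} (c : Set Port × (Port → Option D)) : Prop :=
  ∀ x, (c.2 x).isSome ↔ x ∈ c.1

/-- Composition of constraint automaton steps over port sets `N1` and `N2`. -/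
noncomputable def compCAS {Port D : Type} (N1 N2 : Set Port)
    (c1 c2 : Set Port × (Port → Option D)) :
    Option (Set Port × (Port → Option D)) :=
  open Classical in
  if (c1.1 ∩ N2 = c2.1 ∩ N1) ∧ (∀ x ∈ c1.1 ∩ c2.1, c1.2 x = c2.2 x) then
    some (c1.1 ∪ c2.1, fun x => (c1.2 x).orElse (fun _ => c2.2 x))
  else none


private lemma some_orElse' {α : Type*} (a : α) (f : Unit → Option α) :
    (some a).orElse f = some a := rfl

private lemma none_orElse' {α : Type*} (f : Unit → Option α) :
    (none : Option α).orElse f = f () := rfl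

private lemma cond_ltr {Port D : Type} {N1 N2 N3 X1 X2 X3 : Set Port}
    {g1 g2 g3 : Port → Option D}
    (h1 : ∀ x, (g1 x).isSome ↔ x ∈ X1) (h2 : ∀ x, (g2 x).isSome ↔ x ∈ X2)
    (h3 : ∀ x, (g3 x).isSome ↔ x ∈ X3)
    (hsub1 : X1 ⊆ N1) (hsub2 : X2 ⊆ N2) (hsub3 : X3 ⊆ N3)
    (hP12 : X1 ∩ N2 = X2 ∩ N1) (hA12 : ∀ x ∈ X1 ∩ X2, g1 x = g2 x)
    (hP123 : (X1 ∪ X2) ∩ N3 = X3 ∩ (N1 ∪ N2))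
    (hA123 : ∀ x ∈ (X1 ∪ X2) ∩ X3, ((g1 x).orElse fun _ => g2 x) = g3 x) :
    (X2 ∩ N3 = X3 ∩ N2 ∧ ∀ x ∈ X2 ∩ X3, g2 x = g3 x) ∧
    (X1 ∩ (N2 ∪ N3) = (X2 ∪ X3) ∩ N1 ∧
      ∀ x ∈ X1 ∩ (X2 ∪ X3), g1 x = (g2 x).orElse fun _ => g3 x) := by
  refine ⟨⟨?_, ?_⟩, ?_, ?_⟩
  · ext x
    have p12 := Set.ext_iff.mp hP12 x
    have p123 := Set.ext_iff.mp hP123 x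
    have s1 := @hsub1 x; have s2 := @hsub2 x; have s3 := @hsub3 x
    clear hA12 hA123 h1 h2 h3 hP12 hP123 hsub1 hsub2 hsub3
    simp only [Set.mem_inter_iff, Set.mem_union] at p12 p123 s1 s2 s3 ⊢
    tauto
  · intro x hx
    obtain ⟨hx2, hx3⟩ := hx
    have ha := hA123 x ⟨Or.inr hx2, hx3⟩
    by_cases hx1 : x ∈ X1
    · have he := hA12 x ⟨hx1, hx2⟩
      obtain ⟨a, hg⟩ := Option.isSome_iff_exists.mp ((h1 x).mpr hx1)
      rw [hg, some_orElse'] at ha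
      rw [← he, hg, ha]
    · have hn : g1 x = none := Option.not_isSome_iff_eq_none.mp (fun h => hx1 ((h1 x).mp h))
      rw [hn, none_orElse'] at ha
      exact ha
  · ext x
    have p12 := Set.ext_iff.mp hP12 x
    have p123 := Set.ext_iff.mp hP123 x
    have s1 := @hsub1 x; have s3 := @hsub3 x
    simp only [Set.mem_inter_iff, Set.mem_union] at p12 p123 ⊢
    constructor
    · rintro ⟨hx1, hn2 | hn3⟩
      · obtain ⟨hx2, hn1⟩ := p12.mp ⟨hx1, hn2⟩
        exact ⟨Or.inl hx2, hn1⟩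
      · obtain ⟨hx3, -⟩ := p123.mp ⟨Or.inl hx1, hn3⟩
        exact ⟨Or.inr hx3, s1 hx1⟩
    · rintro ⟨hx2 | hx3, hn1⟩
      · obtain ⟨hx1, hn2⟩ := p12.mpr ⟨hx2, hn1⟩
        exact ⟨hx1, Or.inl hn2⟩
      · obtain ⟨h12, hn3⟩ := p123.mpr ⟨hx3, Or.inl hn1⟩
        rcases h12 with hx1 | hx2
        · exact ⟨hx1, Or.inr hn3⟩
        · obtain ⟨hx1, hn2⟩ := p12.mpr ⟨hx2, hn1⟩
          exact ⟨hx1, Or.inl hn2⟩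
  · intro x hx
    obtain ⟨hx1, hx23⟩ := hx
    by_cases hx2 : x ∈ X2
    · have he := hA12 x ⟨hx1, hx2⟩
      obtain ⟨a, hg⟩ := Option.isSome_iff_exists.mp ((h2 x).mpr hx2)
      rw [he, hg, some_orElse']
    · have hn : g2 x = none := Option.not_isSome_iff_eq_none.mp (fun h => hx2 ((h2 x).mp h))
      have hx3 : x ∈ X3 := hx23.resolve_left hx2
      have ha := hA123 x ⟨Or.inl hx1, hx3⟩
      obtain ⟨a, hg⟩ := Option.isSome_iff_exists.mp ((h1 x).mpr hx1)
      rw [hg, some_orElse'] at ha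
      rw [hn, none_orElse', hg, ha]

private lemma cond_rtl {Port D : Type} {N1 N2 N3 X1 X2 X3 : Set Port}
    {g1 g2 g3 : Port → Option D}
    (h1 : ∀ x, (g1 x).isSome ↔ x ∈ X1) (h2 : ∀ x, (g2 x).isSome ↔ x ∈ X2)
    (h3 : ∀ x, (g3 x).isSome ↔ x ∈ X3)
    (hsub1 : X1 ⊆ N1) (hsub2 : X2 ⊆ N2) (hsub3 : X3 ⊆ N3)
    (hP23 : X2 ∩ N3 = X3 ∩ N2) (hA23 : ∀ x ∈ X2 ∩ X3, g2 x = g3 x)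
    (hP123 : X1 ∩ (N2 ∪ N3) = (X2 ∪ X3) ∩ N1)
    (hA123 : ∀ x ∈ X1 ∩ (X2 ∪ X3), g1 x = (g2 x).orElse fun _ => g3 x) :
    (X1 ∩ N2 = X2 ∩ N1 ∧ ∀ x ∈ X1 ∩ X2, g1 x = g2 x) ∧
    ((X1 ∪ X2) ∩ N3 = X3 ∩ (N1 ∪ N2) ∧
      ∀ x ∈ (X1 ∪ X2) ∩ X3, ((g1 x).orElse fun _ => g2 x) = g3 x) := by
  refine ⟨⟨?_, ?_⟩, ?_, ?_⟩
  · ext x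
    have p23 := Set.ext_iff.mp hP23 x
    have p123 := Set.ext_iff.mp hP123 x
    have s1 := @hsub1 x; have s2 := @hsub2 x; have s3 := @hsub3 x
    clear hA23 hA123 h1 h2 h3 hP23 hP123 hsub1 hsub2 hsub3
    simp only [Set.mem_inter_iff, Set.mem_union] at p23 p123 s1 s2 s3 ⊢
    tauto
  · intro x hx
    obtain ⟨hx1, hx2⟩ := hx
    have ha := hA123 x ⟨hx1, Or.inl hx2⟩
    obtain ⟨a, hg⟩ := Option.isSome_iff_exists.mp ((h2 x).mpr hx2)
    rw [hg, some_orElse'] at ha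
    rw [ha, hg]
  · ext x
    have p23 := Set.ext_iff.mp hP23 x
    have p123 := Set.ext_iff.mp hP123 x
    have s3 := @hsub3 x
    simp only [Set.mem_inter_iff, Set.mem_union] at p23 p123 ⊢
    constructor
    · rintro ⟨hx1 | hx2, hn3⟩
      · obtain ⟨hx23, hn1⟩ := p123.mp ⟨hx1, Or.inr hn3⟩
        rcases hx23 with hx2 | hx3
        · obtain ⟨hx3, hn2⟩ := p23.mp ⟨hx2, hn3⟩
          exact ⟨hx3, Or.inl hn1⟩
        · exact ⟨hx3, Or.inl hn1⟩
      · obtain ⟨hx3, hn2⟩ := p23.mp ⟨hx2, hn3⟩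
        exact ⟨hx3, Or.inr hn2⟩
    · rintro ⟨hx3, hn1 | hn2⟩
      · obtain ⟨hx1, -⟩ := p123.mpr ⟨Or.inr hx3, hn1⟩
        exact ⟨Or.inl hx1, s3 hx3⟩
      · obtain ⟨hx2, hn3⟩ := p23.mpr ⟨hx3, hn2⟩
        exact ⟨Or.inr hx2, hn3⟩
  · intro x hx
    obtain ⟨hx12, hx3⟩ := hx
    by_cases hx1 : x ∈ X1
    · have ha := hA123 x ⟨hx1, Or.inr hx3⟩
      obtain ⟨a, hg⟩ := Option.isSome_iff_exists.mp ((h1 x).mpr hx1)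
      rw [hg, some_orElse']
      by_cases hx2 : x ∈ X2
      · have he := hA23 x ⟨hx2, hx3⟩
        obtain ⟨b, hg2⟩ := Option.isSome_iff_exists.mp ((h2 x).mpr hx2)
        rw [hg, hg2, some_orElse'] at ha
        rw [ha, ← hg2]; exact he
      · have hn : g2 x = none := Option.not_isSome_iff_eq_none.mp (fun h => hx2 ((h2 x).mp h))
        rw [hg, hn, none_orElse'] at ha
        exact ha
    · have hn : g1 x = none := Option.not_isSome_iff_eq_none.mp (fun h => hx1 ((h1 x).mp h))
      have hx2 : x ∈ X2 := hx12.resolve_left hx1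
      rw [hn, none_orElse']
      exact hA23 x ⟨hx2, hx3⟩

/-- Associativity of the composition of constraint automaton steps: a composition
involving `⊥` is `⊥`, and the composite of `cas1 ⊙ cas2` is over `N1 ∪ N2`. -/
theorem compCAS_assoc {Port D : Type} (N1 N2 N3 : Set Port)
    (c1 c2 c3 : Set Port × (Port → Option D))
    (h1 : WFCAS c1) (h2 : WFCAS c2) (h3 : WFCAS c3)
    (hsub1 : c1.1 ⊆ N1) (hsub2 : c2.1 ⊆ N2) (hsub3 : c3.1 ⊆ N3) :
    (compCAS N1 N2 c1 c2).bind (fun c12 => compCAS (N1 ∪ N2) N3 c12 c3)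
      = (compCAS N2 N3 c2 c3).bind (fun c23 => compCAS N1 (N2 ∪ N3) c1 c23) := by
  classical
  obtain ⟨X1, g1⟩ := c1
  obtain ⟨X2, g2⟩ := c2
  obtain ⟨X3, g3⟩ := c3
  simp only [WFCAS] at h1 h2 h3
  simp only [compCAS]
  by_cases hL : (X1 ∩ N2 = X2 ∩ N1 ∧ ∀ x ∈ X1 ∩ X2, g1 x = g2 x) ∧
      ((X1 ∪ X2) ∩ N3 = X3 ∩ (N1 ∪ N2) ∧
        ∀ x ∈ (X1 ∪ X2) ∩ X3, ((g1 x).orElse fun _ => g2 x) = g3 x)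
  · obtain ⟨⟨hP12, hA12⟩, hP123, hA123⟩ := hL
    obtain ⟨⟨hP23, hA23⟩, hP123', hA123'⟩ :=
      cond_ltr h1 h2 h3 hsub1 hsub2 hsub3 hP12 hA12 hP123 hA123
    rw [if_pos ⟨hP12, hA12⟩, if_pos ⟨hP23, hA23⟩]
    simp only [Option.bind_some]
    rw [if_pos ⟨hP123, hA123⟩, if_pos ⟨hP123', hA123'⟩]
    refine congrArg some (Prod.ext ?_ ?_)
    · exact Set.union_assoc X1 X2 X3
    · funext x
      show ((g1 x).orElse _).orElse _ = (g1 x).orElse _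
      cases g1 x <;> rfl
  · by_cases hR : (X2 ∩ N3 = X3 ∩ N2 ∧ ∀ x ∈ X2 ∩ X3, g2 x = g3 x) ∧
        (X1 ∩ (N2 ∪ N3) = (X2 ∪ X3) ∩ N1 ∧
          ∀ x ∈ X1 ∩ (X2 ∪ X3), g1 x = (g2 x).orElse fun _ => g3 x)
    · obtain ⟨⟨hP23, hA23⟩, hP123', hA123'⟩ := hR
      exact absurd (cond_rtl h1 h2 h3 hsub1 hsub2 hsub3 hP23 hA23 hP123' hA123') hL
    · rcases Decidable.not_and_iff_or_not.mp hL with h | h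
      · rw [if_neg h]
        rcases Decidable.not_and_iff_or_not.mp hR with h' | h'
        · rw [if_neg h']; rfl
        · by_cases h23 : X2 ∩ N3 = X3 ∩ N2 ∧ ∀ x ∈ X2 ∩ X3, g2 x = g3 x
          · rw [if_pos h23]
            simp only [Option.bind_some, Option.bind_none]
            rw [if_neg h']
          · rw [if_neg h23]; rfl
      · by_cases h12 : X1 ∩ N2 = X2 ∩ N1 ∧ ∀ x ∈ X1 ∩ X2, g1 x = g2 x
        · rw [if_pos h12]
          simp only [Option.bind_some]
          rw [if_neg h]
          rcases Decidable.not_and_iff_or_not.mp hR with h' | h'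
          · rw [if_neg h']; rfl
          · by_cases h23 : X2 ∩ N3 = X3 ∩ N2 ∧ ∀ x ∈ X2 ∩ X3, g2 x = g3 x
            · rw [if_pos h23]
              simp only [Option.bind_some]
              rw [if_neg h']
            · rw [if_neg h23]; rfl
        · rw [if_neg h12]
          rcases Decidable.not_and_iff_or_not.mp hR with h' | h'
          · rw [if_neg h']; rfl
          · by_cases h23 : X2 ∩ N3 = X3 ∩ N2 ∧ ∀ x ∈ X2 ∩ X3, g2 x = g3 x
            · rw [if_pos h23]
              simp only [Option.bind_some, Option.bind_none]
              rw [if_neg h']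
            · rw [if_neg h23]; rfl
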